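/- Let F be a lift of a PWL circle homeomorphism with rotation number p/q that is NOT conjugate to a rigid rotation. Then the one-sided derivatives of the iterates F^k are unbounded: there exists a point z and a one-sided derivative such that (F^{qm})'(z_±) → ∞ as m → ∞. -/

import Mathlib

open MeasureTheory Filter Set

/-- A lift of an orientation-preserving circle homeomorphism. -/
def IsLift (F : ℝ → ℝ) : Prop :=
  Continuous F ∧ StrictMono F ∧ ∀ x, F (x + 1) = F x + 1

/-- `b` is a break point of `F`: one-sided derivatives exist and differ. -/
def IsBreakPoint (F : ℝ → ℝ) (b : ℝ) : Prop :=
  ∃ dm dp : ℝ, dm ≠ dp ∧ HasDerivWithinAt F dm (Set.Iic b) b ∧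
    HasDerivWithinAt F dp (Set.Ici b) b

/-- `F` is a piecewise linear lift with break point set `B ⊆ [0,1)`:
it is a lift, each point of `B` is a break point, and `F` is affine near any
point not congruent (mod 1) to a break point. -/
def IsPWLLift (F : ℝ → ℝ) (B : Finset ℝ) : Prop :=
  IsLift F ∧ (↑B : Set ℝ) ⊆ Set.Ico (0 : ℝ) 1 ∧
  (∀ b ∈ B, IsBreakPoint F b) ∧
  (∀ x : ℝ, (∀ b ∈ B, ∀ k : ℤ, x ≠ b + k) →
    ∃ ε > 0, ∃ a c : ℝ, ∀ y, |y - x| < ε → F y = a * y + c)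

/-- The rotation number of the lift `F` is `ρ`. -/
def HasRotNum (F : ℝ → ℝ) (ρ : ℝ) : Prop :=
  ∀ x : ℝ, Filter.Tendsto (fun m : ℕ => (F^[m] x - x) / m) Filter.atTop (nhds ρ)

/-- `b` and `b'` lie on the same orbit of the circle map induced by the lift `F`. -/
def SameOrbit (F : ℝ → ℝ) (b b' : ℝ) : Prop :=
  ∃ j : ℕ, ∃ m : ℤ, F^[j] b = b' + m ∨ F^[j] b' = b + m

lemma my_map_add_int {F : ℝ → ℝ} (hF : ∀ x, F (x + 1) = F x + 1) (k : ℤ) (x : ℝ) :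
    F (x + k) = F x + k := by
  induction k using Int.induction_on with
  | zero => simp
  | succ n ih =>
      have := hF (x + n)
      push_cast
      push_cast at ih
      rw [show x + ((n:ℝ) + 1) = x + n + 1 by ring, this, ih]
      ring
  | pred n ih =>
      have := hF (x + (-(n:ℤ) - 1))
      push_cast at this ih ⊢
      have h2 : x + (-(n:ℝ) - 1) + 1 = x + -(n:ℝ) := by ring
      rw [h2, ih] at this
      linarith [this]

lemma my_iter_add_int {F : ℝ → ℝ} (hF : ∀ x, F (x + 1) = F x + 1) (n : ℕ) (k : ℤ) (x : ℝ) :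
    F^[n] (x + k) = F^[n] x + k := by
  induction n generalizing x with
  | zero => simp
  | succ n ih =>
      rw [Function.iterate_succ_apply, Function.iterate_succ_apply,
        my_map_add_int hF k x, ih]

lemma my_neg_conj_iterate (F : ℝ → ℝ) (n : ℕ) (x : ℝ) :
    (fun y => -F (-y))^[n] x = -F^[n] (-x) := by
  induction n generalizing x with
  | zero => simp
  | succ n ih =>
      rw [Function.iterate_succ_apply, Function.iterate_succ_apply, ih]
      simp

lemma my_growth {F : ℝ → ℝ} {q : ℕ} {p : ℤ} {ε : ℝ}
    (hb : ∀ x, x + p + ε ≤ F^[q] x) :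
    ∀ (n : ℕ) (x : ℝ), x + n * ((p : ℝ) + ε) ≤ F^[q * n] x := by
  intro n
  induction n with
  | zero => simp
  | succ n ih =>
      intro x
      have h1 : q * (n + 1) = q + q * n := by ring
      rw [h1, Function.iterate_add_apply]
      have h2 := hb (F^[q * n] x)
      have h3 := ih x
      push_cast
      push_cast at h3
      linarith

lemma my_no_fixed_aux {F : ℝ → ℝ} {q : ℕ} (hq : 0 < q) {p : ℤ} {ε : ℝ} (hε : 0 < ε)
    (hrot : Tendsto (fun m : ℕ => (F^[m] 0 - 0) / m) atTop (nhds ((p : ℝ) / q)))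
    (hb : ∀ x, x + p + ε ≤ F^[q] x) : False := by
  have hq' : (0 : ℝ) < q := by exact_mod_cast hq
  have hmul : Tendsto (fun n : ℕ => q * n) atTop atTop :=
    tendsto_atTop_atTop_of_monotone (fun a b hab => Nat.mul_le_mul_left q hab)
      (fun b => ⟨b, Nat.le_mul_of_pos_left b hq⟩)
  have h1 : Tendsto (fun n : ℕ => (F^[q * n] 0 - 0) / (q * n : ℕ)) atTop (nhds ((p : ℝ) / q)) :=
    hrot.comp hmul
  have h2 : ((p : ℝ) + ε) / q ≤ (p : ℝ) / q := by
    refine ge_of_tendsto h1 ?_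
    filter_upwards [eventually_ge_atTop 1] with n hn
    have hg := my_growth hb n 0
    have hqn : (0 : ℝ) < ((q * n : ℕ) : ℝ) := by
      have : 0 < q * n := Nat.mul_pos hq hn
      exact_mod_cast this
    rw [div_le_div_iff₀ hq' hqn]
    push_cast
    push_cast at hg
    nlinarith [mul_le_mul_of_nonneg_right hg (le_of_lt hq')]
  rw [div_le_div_iff_of_pos_right hq'] at h2
  linarith

lemma my_exists_fixed {F : ℝ → ℝ} {q : ℕ} {p : ℤ} (hq : 0 < q)
    (hcont : Continuous F) (hcomm : ∀ x, F (x + 1) = F x + 1)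
    (hrot : HasRotNum F ((p : ℝ) / q)) :
    ∃ z : ℝ, F^[q] z = z + p := by
  by_contra hno
  push_neg at hno
  set h : ℝ → ℝ := fun x => F^[q] x - x - p with hh
  have hhcont : Continuous h := ((hcont.iterate q).sub continuous_id).sub continuous_const
  have hne : ∀ x, h x ≠ 0 := by
    intro x hx
    simp only [hh] at hx
    exact hno x (by linarith)
  have hper : ∀ (k : ℤ) (x : ℝ), h (x + k) = h x := by
    intro k x; simp only [hh]; rw [my_iter_add_int hcomm q k x]; ring
  have hsign : (∀ x, 0 < h x) ∨ (∀ x, h x < 0) := by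
    rcases lt_or_gt_of_ne (hne 0) with h0 | h0
    · right; intro x
      by_contra hx
      push_neg at hx
      have hx' : 0 < h x := lt_of_le_of_ne hx (Ne.symm (hne x))
      have hmem : (0:ℝ) ∈ Set.uIcc (h 0) (h x) :=
        Set.mem_uIcc.mpr (Or.inl ⟨le_of_lt h0, le_of_lt hx'⟩)
      obtain ⟨z, _, hz⟩ := intermediate_value_uIcc hhcont.continuousOn hmem
      exact hne z hz
    · left; intro x
      by_contra hx
      push_neg at hx
      have hx' : h x < 0 := lt_of_le_of_ne hx (hne x)
      have hmem : (0:ℝ) ∈ Set.uIcc (h 0) (h x) :=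
        Set.mem_uIcc.mpr (Or.inr ⟨le_of_lt hx', le_of_lt h0⟩)
      obtain ⟨z, _, hz⟩ := intermediate_value_uIcc hhcont.continuousOn hmem
      exact hne z hz
  rcases hsign with hpos | hneg
  · obtain ⟨xm, hxm, hmin⟩ := isCompact_Icc.exists_isMinOn
      (Set.nonempty_Icc.mpr zero_le_one) hhcont.continuousOn
    have hε0 : 0 < h xm := hpos xm
    have hbound : ∀ x, h xm ≤ h x := by
      intro x
      have h1 : h x = h (Int.fract x) := by
        conv_lhs => rw [show x = Int.fract x + ⌊x⌋ by rw [Int.fract]; ring]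
        exact hper ⌊x⌋ _
      rw [h1]
      exact hmin ⟨Int.fract_nonneg x, le_of_lt (lt_of_lt_of_le (Int.fract_lt_one x) le_rfl)⟩
    refine my_no_fixed_aux hq hε0 (hrot 0) (fun x => ?_)
    have := hbound x
    simp only [hh] at this ⊢
    linarith
  · obtain ⟨xm, hxm, hmax⟩ := isCompact_Icc.exists_isMaxOn
      (Set.nonempty_Icc.mpr zero_le_one) hhcont.continuousOn
    have hε0 : 0 < -h xm := by linarith [hneg xm]
    have hbound : ∀ x, h x ≤ h xm := by
      intro x
      have h1 : h x = h (Int.fract x) := by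
        conv_lhs => rw [show x = Int.fract x + ⌊x⌋ by rw [Int.fract]; ring]
        exact hper ⌊x⌋ _
      rw [h1]
      exact hmax ⟨Int.fract_nonneg x, le_of_lt (lt_of_lt_of_le (Int.fract_lt_one x) le_rfl)⟩
    have hrot' : Tendsto (fun m : ℕ => ((fun y => -F (-y))^[m] 0 - 0) / m) atTop
        (nhds (((-p : ℤ) : ℝ) / q)) := by
      have h1 := (hrot 0).neg
      have h2 : Tendsto (fun m : ℕ => -((F^[m] 0 - 0) / m)) atTop
          (nhds (((-p : ℤ) : ℝ) / q)) := by
        convert h1 using 2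
        push_cast; ring
      refine h2.congr (fun m => ?_)
      rw [my_neg_conj_iterate F m 0, neg_zero]
      ring
    refine my_no_fixed_aux (F := fun y => -F (-y)) hq hε0 hrot' (fun x => ?_)
    have h2 := hbound (-x)
    simp only [hh] at h2 ⊢
    rw [my_neg_conj_iterate F q x]
    push_cast
    linarith

lemma my_iter_affine_at {F : ℝ → ℝ} {B : Finset ℝ} (hF : IsPWLLift F B) (n : ℕ) (x : ℝ)
    (hx : ∀ j < n, ∀ b ∈ B, ∀ k : ℤ, F^[j] x ≠ b + k) :
    ∃ ε > 0, ∃ a c : ℝ, ∀ y, |y - x| < ε → F^[n] y = a * y + c := by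
  induction n with
  | zero => exact ⟨1, one_pos, 1, 0, fun y _ => by simp⟩
  | succ n ih =>
      obtain ⟨ε, hε, a, c, haff⟩ := ih (fun j hj => hx j (Nat.lt_succ_of_lt hj))
      obtain ⟨ε', hε', a', c', haff'⟩ := hF.2.2.2 (F^[n] x) (hx n (Nat.lt_succ_self n))
      refine ⟨min ε (ε' / (|a| + 1)), by positivity, a' * a, a' * c + c', fun y hy => ?_⟩
      have hy1 : |y - x| < ε := lt_of_lt_of_le hy (min_le_left _ _)
      have hy2 : |y - x| < ε' / (|a| + 1) := lt_of_lt_of_le hy (min_le_right _ _)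
      have hxx : F^[n] x = a * x + c := haff x (by simp [hε])
      have hclose : |F^[n] y - F^[n] x| < ε' := by
        rw [haff y hy1, hxx]
        have h1 : a * y + c - (a * x + c) = a * (y - x) := by ring
        rw [h1, abs_mul]
        have h2 : |a| * |y - x| ≤ |a| * (ε' / (|a| + 1)) :=
          mul_le_mul_of_nonneg_left (le_of_lt hy2) (abs_nonneg a)
        have h3 : |a| * (ε' / (|a| + 1)) < ε' := by
          rw [mul_div_assoc']
          rw [div_lt_iff₀ (by positivity)]
          nlinarith [abs_nonneg a]
        linarith
      rw [Function.iterate_succ_apply', haff' _ hclose, haff y hy1]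
      ring

lemma my_bad_gap {F : ℝ → ℝ} {B : Finset ℝ} (hmono : StrictMono F) (q : ℕ) (u : ℝ) :
    ∃ δ > 0, ∀ x, x ≠ u → |x - u| < δ →
      ∀ j < q, ∀ b ∈ B, ∀ k : ℤ, F^[j] x ≠ b + k := by
  classical
  set Bad : Set ℝ := {x | ∃ j < q, ∃ b ∈ B, ∃ k : ℤ, F^[j] x = b + k} with hBad
  have hfin : (Bad ∩ Set.Icc (u - 1) (u + 1)).Finite := by
    have hsub : Bad ∩ Set.Icc (u - 1) (u + 1) ⊆
        ⋃ j ∈ Finset.range q, F^[j] ⁻¹'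
          (⋃ b ∈ B, (fun k : ℤ => b + (k : ℝ)) ''
            (Set.Icc ⌈F^[j] (u - 1) - b⌉ ⌊F^[j] (u + 1) - b⌋)) := by
      rintro x ⟨⟨j, hj, b, hb, k, hk⟩, hx1, hx2⟩
      refine Set.mem_biUnion (Finset.mem_range.mpr hj) ?_
      refine Set.mem_preimage.mpr (Set.mem_biUnion hb ?_)
      refine ⟨k, ?_, hk.symm⟩
      have hm : StrictMono (F^[j]) := hmono.iterate j
      have h1 : F^[j] (u - 1) ≤ F^[j] x := hm.monotone hx1
      have h2 : F^[j] x ≤ F^[j] (u + 1) := hm.monotone hx2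
      rw [hk] at h1 h2
      exact ⟨Int.ceil_le.mpr (by linarith), Int.le_floor.mpr (by linarith)⟩
    refine Set.Finite.subset ?_ hsub
    refine Set.Finite.biUnion (Finset.range q).finite_toSet (fun j _ => ?_)
    refine Set.Finite.preimage (Set.injOn_of_injective (hmono.iterate j).injective) ?_
    exact Set.Finite.biUnion B.finite_toSet
      (fun b _ => (Set.finite_Icc _ _).image _)
  set t := (Bad ∩ Set.Icc (u - 1) (u + 1)) \ {u} with ht
  have htfin : t.Finite := hfin.diff
  rcases t.eq_empty_or_nonempty with hemp | hne
  · refine ⟨1, one_pos, fun x hxu hxd j hj b hb k hk => ?_⟩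
    have hxBad : x ∈ Bad := ⟨j, hj, b, hb, k, hk⟩
    have : x ∈ t := ⟨⟨hxBad, by constructor <;> [linarith [abs_lt.mp hxd] ; linarith [abs_lt.mp hxd]]⟩, hxu⟩
    rw [hemp] at this
    exact this
  · obtain ⟨x₀, hx₀, hx₀min⟩ := Set.exists_min_image t (fun x => |x - u|) htfin hne
    have hx₀pos : 0 < |x₀ - u| := by
      rw [abs_pos, sub_ne_zero]
      exact hx₀.2
    refine ⟨min 1 |x₀ - u|, by positivity, fun x hxu hxd j hj b hb k hk => ?_⟩
    have hxd1 : |x - u| < 1 := lt_of_lt_of_le hxd (min_le_left _ _)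
    have hxBad : x ∈ Bad := ⟨j, hj, b, hb, k, hk⟩
    have hxt : x ∈ t :=
      ⟨⟨hxBad, by constructor <;> [linarith [abs_lt.mp hxd1] ; linarith [abs_lt.mp hxd1]]⟩, hxu⟩
    have := hx₀min x hxt
    have h2 : |x - u| < |x₀ - u| := lt_of_lt_of_le hxd (min_le_right _ _)
    linarith

lemma my_affine_on_Ioo {G : ℝ → ℝ} {l r : ℝ} (hlr : l < r)
    (h : ∀ x ∈ Set.Ioo l r, ∃ ε > 0, ∃ a c : ℝ, ∀ y, |y - x| < ε → G y = a * y + c) :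
    ∃ a c : ℝ, ∀ x ∈ Set.Ioo l r, G x = a * x + c := by
  classical
  set g : ℝ → ℝ × ℝ := fun x => (deriv G x, G x - deriv G x * x) with hg
  -- g is locally constant on the interval
  have key : ∀ x ∈ Set.Ioo l r, ∃ ε > 0, ∀ y, |y - x| < ε → g y = g x := by
    intro x hx
    obtain ⟨ε, hε, a, c, haff⟩ := h x hx
    have hval : ∀ y, |y - x| < ε / 2 → g y = (a, c) := by
      intro y hy
      have hderiv : deriv G y = a := by
        have hev : G =ᶠ[nhds y] fun z => a * z + c := by
          filter_upwards [Metric.ball_mem_nhds y (by positivity : (0:ℝ) < ε / 2)] with z hz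
          refine haff z ?_
          rw [Real.ball_eq_Ioo] at hz
          have : |z - y| < ε / 2 := abs_lt.mpr ⟨by linarith [hz.1], by linarith [hz.2]⟩
          calc |z - x| = |(z - y) + (y - x)| := by ring_nf
            _ ≤ |z - y| + |y - x| := abs_add_le _ _
            _ < ε := by linarith
        rw [hev.deriv_eq]
        have : HasDerivAt (fun z => a * z + c) a y := by
          simpa using ((hasDerivAt_id y).const_mul a).add_const c
        exact this.deriv
      have hGy : G y = a * y + c := haff y (by linarith [abs_lt.mp hy])
      simp [hg, hderiv, hGy]
    refine ⟨ε / 2, by positivity, fun y hy => ?_⟩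
    rw [hval y hy, hval x (by simp; positivity)]
  -- restrict to the subtype and use preconnectedness
  have hpc : PreconnectedSpace (Set.Ioo l r) := Subtype.preconnectedSpace isPreconnected_Ioo
  have hlc : IsLocallyConstant ((Set.Ioo l r).restrict g) := by
    rw [IsLocallyConstant.iff_exists_open]
    rintro ⟨x, hx⟩
    obtain ⟨ε, hε, hconst⟩ := key x hx
    refine ⟨Subtype.val ⁻¹' Metric.ball x ε, (Metric.isOpen_ball).preimage continuous_subtype_val,
      by simp [Metric.mem_ball, hε], ?_⟩
    rintro ⟨y, hy⟩ hmem
    simp only [Set.mem_preimage, Metric.mem_ball, Real.dist_eq] at hmem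
    exact hconst y hmem
  set x₀ : Set.Ioo l r := ⟨(l + r) / 2, by constructor <;> [linarith ; linarith]⟩ with hx₀
  refine ⟨(g x₀).1, (g x₀).2, fun x hx => ?_⟩
  have heq : g x = g x₀ := hlc.apply_eq_of_preconnectedSpace ⟨x, hx⟩ x₀
  have h1 : G x = (g x).1 * x + (g x).2 := by simp [hg]
  rw [h1, heq]

lemma my_iter_right {G : ℝ → ℝ} {u δ a : ℝ} (hδ : 0 < δ) (ha : 1 < a)
    (h : ∀ y ∈ Set.Icc u (u + δ), G y = u + a * (y - u)) :
    ∀ m, ∀ y ∈ Set.Icc u (u + δ / a ^ m), G^[m] y = u + a ^ m * (y - u) := by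
  intro m
  have ha0 : 0 < a := lt_trans one_pos ha
  induction m with
  | zero => intro y hy; simp
  | succ m ih =>
      intro y hy
      have hpm : 0 < a ^ m := pow_pos ha0 m
      have hsub : y ∈ Set.Icc u (u + δ / a ^ m) := by
        refine ⟨hy.1, le_trans hy.2 ?_⟩
        have h1 : δ / a ^ (m + 1) ≤ δ / a ^ m := by
          apply div_le_div_of_nonneg_left hδ.le hpm
          rw [pow_succ]
          nlinarith
        linarith
      have hGm := ih y hsub
      have h1 : a ^ m * (y - u) ≤ δ / a := by
        have h2 := hy.2
        rw [pow_succ] at h2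
        have h3 : y - u ≤ δ / (a ^ m * a) := by linarith
        calc a ^ m * (y - u) ≤ a ^ m * (δ / (a ^ m * a)) :=
              mul_le_mul_of_nonneg_left h3 hpm.le
          _ = δ / a := by
              field_simp
      have h4 : δ / a ≤ δ := div_le_self hδ.le ha.le
      have hmem : G^[m] y ∈ Set.Icc u (u + δ) := by
        rw [hGm]
        constructor
        · nlinarith [hy.1]
        · linarith
      rw [Function.iterate_succ_apply', hGm]
      rw [hGm] at hmem
      rw [h _ hmem]
      ring

lemma my_iter_q_mul {F : ℝ → ℝ} (hcomm : ∀ x, F (x + 1) = F x + 1) (q : ℕ) (p : ℤ) :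
    ∀ (m : ℕ) (x : ℝ), F^[q * m] x = (fun y => F^[q] y - p)^[m] x + (m : ℝ) * p := by
  intro m
  induction m with
  | zero => simp
  | succ m ih =>
      intro x
      have h1 : q * (m + 1) = q + q * m := by ring
      rw [h1, Function.iterate_add_apply, ih x]
      have h2 : F^[q] ((fun y => F^[q] y - p)^[m] x + ((m : ℤ) * p : ℤ)) =
          F^[q] ((fun y => F^[q] y - p)^[m] x) + ((m : ℤ) * p : ℤ) :=
        my_iter_add_int hcomm q _ _
      push_cast at h2
      rw [h2]
      rw [Function.iterate_succ_apply']
      push_cast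
      ring

lemma my_core {G : ℝ → ℝ} (hGcont : Continuous G) {u δ₀ : ℝ} (hδ₀ : 0 < δ₀)
    (hu : G u = u)
    (hloc : ∀ x, x ≠ u → |x - u| < δ₀ →
      ∃ ε > 0, ∃ a c : ℝ, ∀ y, |y - x| < ε → G y = a * y + c) :
    (∃ η > 0, ∃ a : ℝ, ∀ y ∈ Set.Icc u (u + η), G y = u + a * (y - u)) ∧
    (∃ η > 0, ∃ a : ℝ, ∀ y ∈ Set.Icc (u - η) u, G y = u + a * (y - u)) := by
  constructor
  · obtain ⟨a, c, haff⟩ := my_affine_on_Ioo (show u < u + δ₀ by linarith)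
      (fun x hx => hloc x (by rintro rfl; linarith [hx.1])
        (abs_lt.mpr ⟨by linarith [hx.1], by linarith [hx.2]⟩))
    have hlim : G u = a * u + c := by
      have h1 : Tendsto G (nhdsWithin u (Set.Ioi u)) (nhds (G u)) :=
        (hGcont.tendsto u).mono_left nhdsWithin_le_nhds
      have h2 : Tendsto G (nhdsWithin u (Set.Ioi u)) (nhds (a * u + c)) := by
        have h3 : Tendsto (fun x => a * x + c) (nhdsWithin u (Set.Ioi u)) (nhds (a * u + c)) :=
          (((continuous_const.mul continuous_id).add continuous_const).tendsto u).mono_left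
            nhdsWithin_le_nhds
        refine h3.congr' ?_
        filter_upwards [Ioo_mem_nhdsGT_of_mem (⟨le_rfl, by linarith⟩ : u ∈ Set.Ico u (u + δ₀))]
          with x hx
        exact (haff x hx).symm
      exact tendsto_nhds_unique h1 h2
    refine ⟨δ₀ / 2, by positivity, a, fun y hy => ?_⟩
    rcases eq_or_lt_of_le hy.1 with heq | hlt
    · rw [← heq, hu]; ring
    · have : G y = a * y + c := haff y ⟨hlt, by linarith [hy.2]⟩
      rw [this]
      rw [hu] at hlim
      linarith [hlim]
  · obtain ⟨a, c, haff⟩ := my_affine_on_Ioo (show u - δ₀ < u by linarith)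
      (fun x hx => hloc x (by rintro rfl; linarith [hx.2])
        (abs_lt.mpr ⟨by linarith [hx.1], by linarith [hx.2]⟩))
    have hlim : G u = a * u + c := by
      have h1 : Tendsto G (nhdsWithin u (Set.Iio u)) (nhds (G u)) :=
        (hGcont.tendsto u).mono_left nhdsWithin_le_nhds
      have h2 : Tendsto G (nhdsWithin u (Set.Iio u)) (nhds (a * u + c)) := by
        have h3 : Tendsto (fun x => a * x + c) (nhdsWithin u (Set.Iio u)) (nhds (a * u + c)) :=
          (((continuous_const.mul continuous_id).add continuous_const).tendsto u).mono_left
            nhdsWithin_le_nhds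
        refine h3.congr' ?_
        filter_upwards [Ioo_mem_nhdsLT_of_mem (⟨by linarith, le_rfl⟩ : u ∈ Set.Ioc (u - δ₀) u)]
          with x hx
        exact (haff x hx).symm
      exact tendsto_nhds_unique h1 h2
    refine ⟨δ₀ / 2, by positivity, a, fun y hy => ?_⟩
    rcases eq_or_lt_of_le hy.2 with heq | hlt
    · rw [heq, hu]; ring
    · have : G y = a * y + c := haff y ⟨by linarith [hy.1], hlt⟩
      rw [this]
      rw [hu] at hlim
      linarith [hlim]

lemma my_deriv_right {Φ : ℝ → ℝ} {u η v C : ℝ} (hη : 0 < η)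
    (h : ∀ y ∈ Set.Icc u (u + η), Φ y = C + v * (y - u)) :
    HasDerivWithinAt Φ v (Set.Ici u) u := by
  have hφ : HasDerivAt (fun y => C + v * (y - u)) v u := by
    simpa using (((hasDerivAt_id u).sub_const u).const_mul v).const_add C
  refine (hφ.hasDerivWithinAt).congr_of_eventuallyEq ?_ ?_
  · filter_upwards [Icc_mem_nhdsGE_of_mem (⟨le_rfl, by linarith⟩ : u ∈ Set.Ico u (u + η))]
      with x hx
    exact h x hx
  · exact h u ⟨le_rfl, by linarith⟩

lemma my_deriv_left {Φ : ℝ → ℝ} {u η v C : ℝ} (hη : 0 < η)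
    (h : ∀ y ∈ Set.Icc (u - η) u, Φ y = C + v * (y - u)) :
    HasDerivWithinAt Φ v (Set.Iic u) u := by
  have hφ : HasDerivAt (fun y => C + v * (y - u)) v u := by
    simpa using (((hasDerivAt_id u).sub_const u).const_mul v).const_add C
  refine (hφ.hasDerivWithinAt).congr_of_eventuallyEq ?_ ?_
  · filter_upwards [Icc_mem_nhdsLE_of_mem (⟨by linarith, le_rfl⟩ : u ∈ Set.Ioc (u - η) u)]
      with x hx
    exact h x hx
  · exact h u ⟨by linarith, le_rfl⟩

/-- if a PWL circle homeomorphism with rotation number `p/q` is not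
conjugate to a rigid rotation (i.e. `F^q` is not the translation by `p`), then at some
point the one-sided derivatives of `F^{qm}` tend to infinity. -/
theorem stmt10 (F : ℝ → ℝ) (B : Finset ℝ) (p : ℤ) (q : ℕ) (hq : 0 < q)
    (hF : IsPWLLift F B) (hrot : HasRotNum F ((p : ℝ) / q))
    (hnconj : ¬ ∀ x, F^[q] x = x + p) :
    ∃ z : ℝ, ∃ d : ℕ → ℝ,
      (∀ m : ℕ, HasDerivWithinAt (F^[q * m]) (d m) (Set.Iic z) z ∨
        HasDerivWithinAt (F^[q * m]) (d m) (Set.Ici z) z) ∧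
      Filter.Tendsto d Filter.atTop Filter.atTop := by
  obtain ⟨⟨hcont, hmono, hcomm⟩, hBIco, hbreakB, haffloc⟩ := hF
  have hF' : IsPWLLift F B := ⟨⟨hcont, hmono, hcomm⟩, hBIco, hbreakB, haffloc⟩
  set G : ℝ → ℝ := fun x => F^[q] x - p with hGdef
  have hGcont : Continuous G := (hcont.iterate q).sub continuous_const
  have hGK : ∀ (k : ℤ) (x : ℝ), G (x + k) = G x + k := by
    intro k x
    simp only [hGdef]
    rw [my_iter_add_int hcomm q k x]; ring
  obtain ⟨z₀, hz₀⟩ := my_exists_fixed hq hcont hcomm hrot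
  have hz₀' : G z₀ = z₀ := by simp only [hGdef]; rw [hz₀]; ring
  obtain ⟨y, hy⟩ : ∃ y, G y ≠ y := by
    by_contra hall
    push_neg at hall
    refine hnconj (fun x => ?_)
    have := hall x
    simp only [hGdef] at this
    linarith
  have hKclosed : IsClosed {x : ℝ | G x = x} := isClosed_eq hGcont continuous_id
  rcases lt_or_gt_of_ne hy with hGy | hGy
  · -- G y < y : take u = inf of fixed points ≥ y, expansion on the left
    set S : Set ℝ := {x | G x = x} ∩ Set.Ici y with hSdef
    have hSclosed : IsClosed S := hKclosed.inter isClosed_Ici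
    have hSne : S.Nonempty := by
      refine ⟨z₀ + ((-⌊z₀ - y⌋ : ℤ) : ℝ), ?_, ?_⟩
      · show G _ = _
        rw [hGK, hz₀']
      · have := Int.floor_le (z₀ - y)
        simp only [Set.mem_Ici]
        push_cast
        linarith
    have hSbdd : BddBelow S := ⟨y, fun x hx => hx.2⟩
    set u := sInf S with hudef
    have huS : u ∈ S := hSclosed.csInf_mem hSne hSbdd
    have hufix : G u = u := huS.1
    have hyu : y < u := by
      have hle : y ≤ u := huS.2
      rcases eq_or_lt_of_le hle with heq | h
      · exact absurd (by rw [← heq] at hufix; exact hufix) hy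
      · exact h
    have hneg : ∀ x ∈ Set.Ico y u, G x < x := by
      intro x hx
      rcases lt_trichotomy (G x) x with h | h | h
      · exact h
      · exact absurd (csInf_le hSbdd ⟨h, hx.1⟩) (not_le.mpr hx.2)
      · exfalso
        have hcontOn : ContinuousOn (fun t => G t - t) (Set.uIcc y x) :=
          (hGcont.sub continuous_id).continuousOn
        have hmem : (0 : ℝ) ∈ Set.uIcc (G y - y) (G x - x) :=
          Set.mem_uIcc.mpr (Or.inl ⟨by linarith, by linarith⟩)
        obtain ⟨z, hzmem, hz⟩ := intermediate_value_uIcc hcontOn hmem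
        rw [Set.uIcc_of_le hx.1] at hzmem
        have hzfix : G z = z := by have := sub_eq_zero.mp hz; linarith
        have : u ≤ z := csInf_le hSbdd ⟨hzfix, hzmem.1⟩
        linarith [hx.2, hzmem.2]
    obtain ⟨δ₀, hδ₀0, hgap⟩ := my_bad_gap (B := B) hmono q u
    have hloc : ∀ x, x ≠ u → |x - u| < δ₀ →
        ∃ ε > 0, ∃ a c : ℝ, ∀ y', |y' - x| < ε → G y' = a * y' + c := by
      intro x hxu hxd
      obtain ⟨ε, hε, a, c, haff⟩ := my_iter_affine_at hF' q x (hgap x hxu hxd)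
      exact ⟨ε, hε, a, c - p, fun y' hy' => by simp only [hGdef]; rw [haff y' hy']; ring⟩
    obtain ⟨-, η, hη, a, haff⟩ := my_core hGcont hδ₀0 hufix hloc
    set t := min η (u - y) with htdef
    have ht : 0 < t := lt_min hη (by linarith)
    have ha : 1 < a := by
      have hx1 : u - t / 2 ∈ Set.Icc (u - η) u := by
        constructor <;> [linarith [min_le_left η (u - y)] ; linarith]
      have hx2 : u - t / 2 ∈ Set.Ico y u := by
        constructor <;> [linarith [min_le_right η (u - y)] ; linarith]
      have h1 := hneg _ hx2
      rw [haff _ hx1] at h1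
      nlinarith
    -- reflect
    set H : ℝ → ℝ := fun s => -G (-s) with hHdef
    have hHaff : ∀ s ∈ Set.Icc (-u) (-u + η), H s = -u + a * (s - (-u)) := by
      intro s hs
      have : -s ∈ Set.Icc (u - η) u := ⟨by linarith [hs.2], by linarith [hs.1]⟩
      simp only [hHdef]
      rw [haff _ this]
      ring
    have hiter := my_iter_right hη ha hHaff
    refine ⟨u, fun m => a ^ m, fun m => Or.inl ?_, tendsto_pow_atTop_atTop_of_one_lt ha⟩
    have ha0 : (0 : ℝ) < a := lt_trans one_pos ha
    refine my_deriv_left (η := η / a ^ m) (C := u + m * p) (div_pos hη (pow_pos ha0 m)) ?_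
    intro y' hy'
    have hmem : -y' ∈ Set.Icc (-u) (-u + η / a ^ m) := ⟨by linarith [hy'.2], by linarith [hy'.1]⟩
    have h1 := hiter m (-y') hmem
    rw [my_neg_conj_iterate G m (-y')] at h1
    simp only [neg_neg] at h1
    have h2 : G^[m] y' = u + a ^ m * (y' - u) := by linarith
    rw [my_iter_q_mul hcomm q p m y', h2]
    ring
  · -- y < G y : take u = sup of fixed points ≤ y, expansion on the right
    set S : Set ℝ := {x | G x = x} ∩ Set.Iic y with hSdef
    have hSclosed : IsClosed S := hKclosed.inter isClosed_Iic
    have hSne : S.Nonempty := by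
      refine ⟨z₀ + ((-⌈z₀ - y⌉ : ℤ) : ℝ), ?_, ?_⟩
      · show G _ = _
        rw [hGK, hz₀']
      · have := Int.le_ceil (z₀ - y)
        simp only [Set.mem_Iic]
        push_cast
        linarith
    have hSbdd : BddAbove S := ⟨y, fun x hx => hx.2⟩
    set u := sSup S with hudef
    have huS : u ∈ S := hSclosed.csSup_mem hSne hSbdd
    have hufix : G u = u := huS.1
    have hyu : u < y := by
      have hle : u ≤ y := huS.2
      rcases eq_or_lt_of_le hle with heq | h
      · exact absurd (by rw [heq] at hufix; exact hufix) hy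
      · exact h
    have hpos : ∀ x ∈ Set.Ioc u y, x < G x := by
      intro x hx
      rcases lt_trichotomy (G x) x with h | h | h
      · exfalso
        have hcontOn : ContinuousOn (fun t => G t - t) (Set.uIcc x y) :=
          (hGcont.sub continuous_id).continuousOn
        have hmem : (0 : ℝ) ∈ Set.uIcc (G x - x) (G y - y) :=
          Set.mem_uIcc.mpr (Or.inl ⟨by linarith, by linarith⟩)
        obtain ⟨z, hzmem, hz⟩ := intermediate_value_uIcc hcontOn hmem
        rw [Set.uIcc_of_le hx.2] at hzmem
        have hzfix : G z = z := by have := sub_eq_zero.mp hz; linarith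
        have : z ≤ u := le_csSup hSbdd ⟨hzfix, hzmem.2⟩
        linarith [hx.1, hzmem.1]
      · exact absurd (le_csSup hSbdd ⟨h, hx.2⟩) (not_le.mpr hx.1)
      · exact h
    obtain ⟨δ₀, hδ₀0, hgap⟩ := my_bad_gap (B := B) hmono q u
    have hloc : ∀ x, x ≠ u → |x - u| < δ₀ →
        ∃ ε > 0, ∃ a c : ℝ, ∀ y', |y' - x| < ε → G y' = a * y' + c := by
      intro x hxu hxd
      obtain ⟨ε, hε, a, c, haff⟩ := my_iter_affine_at hF' q x (hgap x hxu hxd)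
      exact ⟨ε, hε, a, c - p, fun y' hy' => by simp only [hGdef]; rw [haff y' hy']; ring⟩
    obtain ⟨⟨η, hη, a, haff⟩, -⟩ := my_core hGcont hδ₀0 hufix hloc
    set t := min η (y - u) with htdef
    have ht : 0 < t := lt_min hη (by linarith)
    have ha : 1 < a := by
      have hx1 : u + t / 2 ∈ Set.Icc u (u + η) := by
        constructor <;> [linarith ; linarith [min_le_left η (y - u)]]
      have hx2 : u + t / 2 ∈ Set.Ioc u y := by
        constructor <;> [linarith ; linarith [min_le_right η (y - u)]]
      have h1 := hpos _ hx2
      rw [haff _ hx1] at h1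
      nlinarith
    have hiter := my_iter_right hη ha haff
    refine ⟨u, fun m => a ^ m, fun m => Or.inr ?_, tendsto_pow_atTop_atTop_of_one_lt ha⟩
    have ha0 : (0 : ℝ) < a := lt_trans one_pos ha
    refine my_deriv_right (η := η / a ^ m) (C := u + m * p) (div_pos hη (pow_pos ha0 m)) ?_
    intro y' hy'
    have h1 := hiter m y' hy'
    rw [my_iter_q_mul hcomm q p m y', h1]
    ring
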